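/- If G is a split graph and H is any graph, then the composition (G, A, B) ∘ H is a split graph if and only if H is a split graph. -/

import Mathlib

open SimpleGraph Finset

/-- `s` is an independent set in `G`. -/
def IsIndepSet {α : Type*} (G : SimpleGraph α) (s : Set α) : Prop :=
  s.Pairwise fun a b => ¬ G.Adj a b

/-- `(G, A, B)` is a splitted graph: `A` an independent set and `B` a clique
partitioning the vertex set of `G`. -/
def IsSplitted {α : Type*} (G : SimpleGraph α) (A B : Set α) : Prop :=
  _root_.IsIndepSet G A ∧ G.IsClique B ∧ A ∪ B = Set.univ ∧ Disjoint A B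

/-- `G` is a split graph. -/
def IsSplitGraph {α : Type*} (G : SimpleGraph α) : Prop :=
  ∃ A B : Set α, IsSplitted G A B

/-- Tyshkevich composition `(G, A, B) ∘ H`: the disjoint union of `G` and `H`
together with all edges between the clique `B` and the vertices of `H`. -/
def comp {α β : Type*} (G : SimpleGraph α) (B : Set α) (H : SimpleGraph β) :
    SimpleGraph (α ⊕ β) where
  Adj x y :=
    match x, y with
    | Sum.inl a, Sum.inl a' => G.Adj a a'
    | Sum.inr b, Sum.inr b' => H.Adj b b'
    | Sum.inl a, Sum.inr _ => a ∈ B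
    | Sum.inr _, Sum.inl a => a ∈ B
  symm := by
    constructor
    rintro (a | b) (a' | b') h
    · exact G.adj_symm h
    · exact h
    · exact h
    · exact H.adj_symm h
  loopless := by
    constructor
    rintro (a | b) h
    · exact G.irrefl h
    · exact H.irrefl h

/-- The degree of a vertex, as the cardinality of its neighborhood. -/
noncomputable def deg {α : Type*} (G : SimpleGraph α) (v : α) : ℕ :=
  (G.neighborSet v).ncard

/-- The disjoint union of two edges. -/
def twoK2 : SimpleGraph (Fin 4) :=
  SimpleGraph.fromRel fun a b => (a.val = 0 ∧ b.val = 1) ∨ (a.val = 2 ∧ b.val = 3)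

/-- The 4-cycle. -/
def cycle4 : SimpleGraph (Fin 4) :=
  SimpleGraph.fromRel fun a b =>
    (a.val = 0 ∧ b.val = 1) ∨ (a.val = 1 ∧ b.val = 2) ∨
    (a.val = 2 ∧ b.val = 3) ∨ (a.val = 3 ∧ b.val = 0)

/-- The path on four vertices. -/
def path4 : SimpleGraph (Fin 4) :=
  SimpleGraph.fromRel fun a b =>
    (a.val = 0 ∧ b.val = 1) ∨ (a.val = 1 ∧ b.val = 2) ∨ (a.val = 2 ∧ b.val = 3)

/-- The 5-cycle. -/
def cycle5 : SimpleGraph (Fin 5) :=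
  SimpleGraph.fromRel fun a b =>
    (a.val = 0 ∧ b.val = 1) ∨ (a.val = 1 ∧ b.val = 2) ∨
    (a.val = 2 ∧ b.val = 3) ∨ (a.val = 3 ∧ b.val = 4) ∨ (a.val = 4 ∧ b.val = 0)

/-- the composition `(G, A, B) ∘ H` is a split graph iff `H` is. -/
theorem stmt6 {α β : Type*} (G : SimpleGraph α) (A B : Set α) (H : SimpleGraph β)
    (hsplit : IsSplitted G A B) :
    IsSplitGraph (comp G B H) ↔ IsSplitGraph H := by
  obtain ⟨hA, hB, hU, hD⟩ := hsplit
  constructor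
  · rintro ⟨A', B', hA', hB', hU', hD'⟩
    refine ⟨{b | Sum.inr b ∈ A'}, {b | Sum.inr b ∈ B'}, ?_, ?_, ?_, ?_⟩
    · intro x hx y hy hxy hadj
      exact hA' hx hy (by simpa using hxy) hadj
    · intro x hx y hy hxy
      exact hB' hx hy (by simpa using hxy)
    · ext b
      simp only [Set.mem_union, Set.mem_setOf_eq, Set.mem_univ, iff_true]
      have := hU'.ge (Set.mem_univ (Sum.inr b))
      exact this
    · rw [Set.disjoint_left]
      intro b hb hb'
      exact hD'.le_bot ⟨hb, hb'⟩
  · rintro ⟨A₂, B₂, hA₂, hB₂, hU₂, hD₂⟩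
    refine ⟨Sum.inl '' A ∪ Sum.inr '' A₂, Sum.inl '' B ∪ Sum.inr '' B₂, ?_, ?_, ?_, ?_⟩
    · rintro x (⟨a, ha, rfl⟩ | ⟨a, ha, rfl⟩) y (⟨b, hb, rfl⟩ | ⟨b, hb, rfl⟩) hxy hadj
      · exact hA ha hb (by simpa using hxy) hadj
      · exact hD.le_bot ⟨ha, hadj⟩
      · exact hD.le_bot ⟨hb, hadj⟩
      · exact hA₂ ha hb (by simpa using hxy) hadj
    · rintro x (⟨a, ha, rfl⟩ | ⟨a, ha, rfl⟩) y (⟨b, hb, rfl⟩ | ⟨b, hb, rfl⟩) hxy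
      · exact hB ha hb (by simpa using hxy)
      · exact ha
      · exact hb
      · exact hB₂ ha hb (by simpa using hxy)
    · ext x
      cases x with
      | inl a =>
        have := hU.ge (Set.mem_univ a)
        simp only [Set.mem_union, Set.mem_image, Set.mem_univ, iff_true]
        rcases this with h | h
        · exact Or.inl (Or.inl ⟨a, h, rfl⟩)
        · exact Or.inr (Or.inl ⟨a, h, rfl⟩)
      | inr b =>
        have := hU₂.ge (Set.mem_univ b)
        simp only [Set.mem_union, Set.mem_image, Set.mem_univ, iff_true]
        rcases this with h | h
        · exact Or.inl (Or.inr ⟨b, h, rfl⟩)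
        · exact Or.inr (Or.inr ⟨b, h, rfl⟩)
    · rw [Set.disjoint_left]
      rintro x (⟨a, ha, rfl⟩ | ⟨a, ha, rfl⟩) (⟨b, hb, h⟩ | ⟨b, hb, h⟩)
      · cases h; exact hD.le_bot ⟨ha, hb⟩
      · cases h
      · cases h
      · cases h; exact hD₂.le_bot ⟨ha, hb⟩
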